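/- Define, for integers ℓ, m ≥ 0, the rational numbers A_{ℓ,m} := (m/ℓ)·C(2ℓ, ℓ−m) if ℓ ≥ 1 (so A_{ℓ,m} = 0 when m = 0 or m > ℓ), A_{0,0} := 1 and A_{0,m} := 0 for m ≥ 1; and B_{m,ℓ} := (−1)^{m−ℓ}·C(m+ℓ−1, m−ℓ) for 0 ≤ ℓ ≤ m (with B_{0,0} := 1), and B_{m,ℓ} := 0 for ℓ > m. Then B is the inverse of the unitriangular matrix A: for all integers m, ℓ' ≥ 0, Σ_{ℓ=0}^{m} B_{m,ℓ}·A_{ℓ,ℓ'} = 1 if m = ℓ' and = 0 otherwise. -/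

import Mathlib

def ch (n k : ℤ) : ℚ := if 0 ≤ k ∧ k ≤ n then ((n.toNat).choose k.toNat : ℚ) else 0

lemma ch_of_neg {n k : ℤ} (h : k < 0) : ch n k = 0 := by
  simp only [ch, if_neg (by omega : ¬(0 ≤ k ∧ k ≤ n))]

lemma ch_of_gt {n k : ℤ} (h : n < k) : ch n k = 0 := by
  simp only [ch, if_neg (by omega : ¬(0 ≤ k ∧ k ≤ n))]

lemma ch_nat (n k : ℕ) : ch n k = (n.choose k : ℚ) := by
  rcases le_or_gt (k:ℤ) n with h | h
  · simp [ch, h]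
  · rw [ch_of_gt h, Nat.choose_eq_zero_of_lt (by exact_mod_cast h), Nat.cast_zero]

lemma ch_pascal (n k : ℤ) (hn : 0 ≤ n) : ch (n+1) k = ch n k + ch n (k-1) := by
  rcases lt_or_ge k 0 with hk | hk
  · rw [ch_of_neg hk, ch_of_neg hk, ch_of_neg (by omega)]; ring
  rcases lt_or_ge (n+1) k with hk2 | hk2
  · rw [ch_of_gt hk2, ch_of_gt (by omega), ch_of_gt (by omega)]; ring
  -- 0 ≤ k ≤ n+1
  rcases eq_or_lt_of_le hk with h0 | h0
  · -- k = 0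
    subst h0
    have h1 : ch n ((0:ℤ)-1) = 0 := ch_of_neg (by omega)
    rw [h1]
    simp [ch, hn, (by omega : (0:ℤ) ≤ n+1)]
  · -- 1 ≤ k
    obtain ⟨k', rfl⟩ : ∃ k' : ℕ, k = (k' : ℤ) + 1 := ⟨(k-1).toNat, by omega⟩
    obtain ⟨n', rfl⟩ : ∃ n' : ℕ, n = (n' : ℤ) := ⟨n.toNat, by omega⟩
    push_cast
    have e1 : ((n':ℤ)+1) = ((n'+1 : ℕ) : ℤ) := by push_cast; ring
    have e2 : ((k':ℤ)+1) = ((k'+1 : ℕ) : ℤ) := by push_cast; ring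
    have e3 : (((k'+1:ℕ) : ℤ))-1 = ((k' : ℕ) : ℤ) := by push_cast; ring
    rw [e1, e2, e3, ch_nat, ch_nat, ch_nat, Nat.choose_succ_succ]
    push_cast; ring

/-- The matrix `A`: `A_{ℓ,m} = (m/ℓ)·C(2ℓ,ℓ-m)` for `ℓ ≥ 1` and `m ≤ ℓ`
(so `A_{ℓ,m} = 0` when `m = 0` or `m > ℓ`), with `A_{0,0} = 1` and `A_{0,m} = 0` for `m ≥ 1`. -/
def Amat (ℓ m : ℕ) : ℚ :=
  if ℓ = 0 then (if m = 0 then 1 else 0)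
  else if ℓ < m then 0
  else (m : ℚ) / (ℓ : ℚ) * (Nat.choose (2 * ℓ) (ℓ - m) : ℚ)

lemma amat_eq (ℓ k : ℕ) (hℓ : 1 ≤ ℓ) :
    Amat ℓ k = ch (2*(ℓ:ℤ) - 1) ((ℓ:ℤ) - k) - ch (2*(ℓ:ℤ) - 1) ((ℓ:ℤ) - k - 1) := by
  rcases Nat.eq_zero_or_pos k with rfl | hk
  · -- k = 0
    obtain ⟨m, rfl⟩ : ∃ m, ℓ = m + 1 := ⟨ℓ - 1, by omega⟩
    have e1 : (2*((m:ℤ)+1) - 1) = ((2*m+1 : ℕ) : ℤ) := by push_cast; ring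
    have e2 : ((m:ℤ)+1) - ((0:ℕ):ℤ) = ((m+1 : ℕ) : ℤ) := by push_cast; ring
    have e3 : (((m+1:ℕ):ℤ)) - 1 = ((m : ℕ) : ℤ) := by push_cast; ring
    simp only [Amat, if_neg (by omega : ¬ m + 1 = 0), if_neg (by omega : ¬ m + 1 < 0),
      Nat.cast_add, Nat.cast_one]
    rw [e1, e2, e3, ch_nat, ch_nat, Nat.choose_symm_half]
    simp
  rcases lt_or_ge ℓ k with h | h
  · -- ℓ < k
    rw [ch_of_neg (by push_cast; omega), ch_of_neg (by push_cast; omega)]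
    simp only [Amat, if_neg (by omega : ¬ ℓ = 0), if_pos h]
    ring
  -- 1 ≤ k ≤ ℓ
  have hA : Amat ℓ k = (k : ℚ) / (ℓ : ℚ) * (Nat.choose (2 * ℓ) (ℓ - k) : ℚ) := by
    simp [Amat, if_neg (by omega : ¬ ℓ = 0), if_neg (by omega : ¬ ℓ < k)]
  rw [hA]
  set j : ℕ := ℓ - k with hj
  have ej : ((ℓ:ℤ) - k) = (j : ℤ) := by omega
  rw [ej]
  rcases Nat.eq_zero_or_pos j with hj0 | hj1
  · -- k = ℓ
    have e1 : (2*(ℓ:ℤ) - 1) = ((2*ℓ-1 : ℕ) : ℤ) := by omega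
    have hz : ch (((2*ℓ-1:ℕ)):ℤ) ((j:ℤ) - 1) = 0 := ch_of_neg (by omega)
    rw [e1, hz, hj0]
    rw [show ((0:ℕ):ℤ) = (((0:ℕ)):ℤ) from rfl, ch_nat]
    have hkl : (k:ℚ) = (ℓ:ℚ) := by
      have : k = ℓ := by omega
      exact_mod_cast congrArg (fun x : ℕ => (x:ℚ)) this
    rw [hkl]
    have hl0 : (ℓ:ℚ) ≠ 0 := Nat.cast_ne_zero.mpr (by omega)
    simp [hl0]
  · -- 1 ≤ j
    have e1 : (2*(ℓ:ℤ) - 1) = ((2*ℓ-1 : ℕ) : ℤ) := by omega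
    have e2 : ((j:ℤ)) - 1 = ((j-1 : ℕ) : ℤ) := by omega
    rw [e1, e2, ch_nat, ch_nat]
    have h1 := Nat.choose_mul_succ_eq (2*ℓ-1) j
    have h2 := Nat.add_one_mul_choose_eq (2*ℓ-1) (j-1)
    have hsub1 : 2*ℓ-1+1 = 2*ℓ := by omega
    have hsucc : (2*ℓ-1).succ = 2*ℓ := by omega
    have hjsucc : (j-1).succ = j := by omega
    rw [hsub1] at h1
    rw [hsub1, show j-1+1 = j by omega] at h2
    have h1' : ((2*ℓ-1).choose j : ℚ) * (2*ℓ) = ((2*ℓ).choose j : ℚ) * (2*(ℓ:ℚ) - j) := by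
      have hc : ((2*ℓ - j : ℕ) : ℚ) = 2*(ℓ:ℚ) - j := by
        have : ((2*ℓ - j : ℕ) : ℤ) = 2*(ℓ:ℤ) - j := by omega
        exact_mod_cast this
      calc ((2*ℓ-1).choose j : ℚ) * (2*ℓ)
          = (((2*ℓ-1).choose j * (2*ℓ) : ℕ) : ℚ) := by push_cast; ring
        _ = (((2*ℓ).choose j * (2*ℓ - j) : ℕ) : ℚ) := by rw [h1]
        _ = ((2*ℓ).choose j : ℚ) * (2*(ℓ:ℚ) - j) := by push_cast [hc]; ring
    have h2' : (2*(ℓ:ℚ)) * ((2*ℓ-1).choose (j-1) : ℚ) = ((2*ℓ).choose j : ℚ) * j := by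
      exact_mod_cast congrArg (fun x : ℕ => (x:ℚ)) h2
    have hl0 : (ℓ:ℚ) ≠ 0 := Nat.cast_ne_zero.mpr (by omega)
    have hkj : (k:ℚ) = (ℓ:ℚ) - j := by
      have : (k:ℤ) = (ℓ:ℤ) - j := by omega
      exact_mod_cast this
    rw [div_mul_eq_mul_div, div_eq_iff hl0]
    linear_combination hkj * ((2*ℓ).choose j : ℚ) - h1'/2 + h2'/2

lemma amat_zero (k : ℕ) : Amat 0 k = if k = 0 then 1 else 0 := by simp [Amat]

lemma amat_k0 (ℓ : ℕ) (hℓ : 1 ≤ ℓ) : Amat ℓ 0 = 0 := by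
  simp [Amat, if_neg (by omega : ¬ ℓ = 0)]

lemma amat_rec (ℓ k : ℕ) :
    Amat (ℓ+1) (k+1) = Amat ℓ k + 2*Amat ℓ (k+1) + Amat ℓ (k+2) := by
  have key : ∀ n j : ℤ, 0 ≤ n →
      ch (n+2) j - ch (n+2) (j-1) =
        (ch n j - ch n (j-1)) + 2*(ch n (j-1) - ch n (j-2)) + (ch n (j-2) - ch n (j-3)) := by
    intro n j hn
    have p1 : ch (n+2) j = ch (n+1) j + ch (n+1) (j-1) := by
      have := ch_pascal (n+1) j (by omega)
      rwa [show n+1+1 = n+2 by ring] at this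
    have p1' : ch (n+2) (j-1) = ch (n+1) (j-1) + ch (n+1) (j-2) := by
      have := ch_pascal (n+1) (j-1) (by omega)
      rwa [show n+1+1 = n+2 by ring, show j-1-1 = j-2 by ring] at this
    have p2 : ch (n+1) j = ch n j + ch n (j-1) := ch_pascal n j hn
    have p2' : ch (n+1) (j-1) = ch n (j-1) + ch n (j-2) := by
      have := ch_pascal n (j-1) hn
      rwa [show j-1-1 = j-2 by ring] at this
    have p2'' : ch (n+1) (j-2) = ch n (j-2) + ch n (j-3) := by
      have := ch_pascal n (j-2) hn
      rwa [show j-2-1 = j-3 by ring] at this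
    linarith
  rcases Nat.eq_zero_or_pos ℓ with rfl | hℓ
  · rcases k with _ | k <;> norm_num [Amat]
  · rw [amat_eq (ℓ+1) (k+1) (by omega), amat_eq ℓ k hℓ, amat_eq ℓ (k+1) hℓ,
      amat_eq ℓ (k+2) hℓ]
    have h := key (2*(ℓ:ℤ)-1) ((ℓ:ℤ)-(k:ℤ)) (by omega)
    push_cast
    ring_nf
    ring_nf at h
    linarith [h]

/-- The matrix `B`: `B_{m,ℓ} = (-1)^{m-ℓ}·C(m+ℓ-1,m-ℓ)` for `ℓ ≤ m`
(in particular `B_{0,0} = 1`), and `B_{m,ℓ} = 0` for `ℓ > m`. -/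
def Bmat (m ℓ : ℕ) : ℚ :=
  if m < ℓ then 0 else (-1 : ℚ) ^ (m - ℓ) * (Nat.choose (m + ℓ - 1) (m - ℓ) : ℚ)

def bb (m ℓ : ℕ) : ℚ := (-1:ℚ)^(m+ℓ) * ch ((m:ℤ)+ℓ-1) ((m:ℤ)-ℓ)

lemma bmat_gt {m ℓ : ℕ} (h : m < ℓ) : Bmat m ℓ = 0 := by simp [Bmat, h]

lemma bmat_eq (m ℓ : ℕ) (h : m ≠ 0 ∨ ℓ ≠ 0) : Bmat m ℓ = bb m ℓ := by
  rcases lt_or_ge m ℓ with h1 | h1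
  · rw [bmat_gt h1, bb, ch_of_neg (by push_cast; omega), mul_zero]
  -- ℓ ≤ m, and m ≥ 1
  have hm : 1 ≤ m := by omega
  rcases Nat.eq_zero_or_pos ℓ with rfl | hℓ
  · rw [Bmat, if_neg (by omega), bb, ch_of_gt (by push_cast; omega), mul_zero,
      Nat.choose_eq_zero_of_lt (by omega), Nat.cast_zero, mul_zero]
  · rw [Bmat, if_neg (by omega), bb]
    have e1 : ((m:ℤ)+ℓ-1) = ((m+ℓ-1 : ℕ) : ℤ) := by omega
    have e2 : ((m:ℤ)-ℓ) = ((m-ℓ : ℕ) : ℤ) := by omega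
    rw [e1, e2, ch_nat]
    have hs : (-1:ℚ)^(m+ℓ) = (-1:ℚ)^(m-ℓ) := by
      have : m+ℓ = (m-ℓ) + 2*ℓ := by omega
      rw [this, pow_add, pow_mul]
      norm_num
    rw [hs]

lemma bmat_zero_right (m : ℕ) (hm : 1 ≤ m) : Bmat m 0 = 0 := by
  rw [Bmat, if_neg (by omega), Nat.choose_eq_zero_of_lt (by omega), Nat.cast_zero, mul_zero]

lemma bb_rec (m ℓ : ℕ) :
    bb (m+2) (ℓ+1) = bb (m+1) ℓ - 2*bb (m+1) (ℓ+1) - bb m (ℓ+1) := by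
  set N : ℤ := (m:ℤ) + ℓ with hN
  set J : ℤ := (m:ℤ) - ℓ with hJ
  have hN0 : 0 ≤ N := by positivity
  have q1 : ch (N+2) (J+1) = ch (N+1) (J+1) + ch (N+1) J := by
    have := ch_pascal (N+1) (J+1) (by omega)
    rwa [show N+1+1 = N+2 by ring, show J+1-1 = J by ring] at this
  have q2 : ch (N+1) (J+1) = ch N (J+1) + ch N J := ch_pascal N (J+1) (by omega) |>.trans
    (by rw [show J+1-1 = J by ring])
  have q3 : ch (N+1) J = ch N J + ch N (J-1) := ch_pascal N J hN0
  have s1 : (-1:ℚ)^(m+2+(ℓ+1)) = -(-1:ℚ)^(m+ℓ) := by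
    rw [show m+2+(ℓ+1) = (m+ℓ)+3 by ring, pow_add]; norm_num
  have s2 : (-1:ℚ)^(m+1+ℓ) = -(-1:ℚ)^(m+ℓ) := by
    rw [show m+1+ℓ = (m+ℓ)+1 by ring, pow_add]; norm_num
  have s3 : (-1:ℚ)^(m+1+(ℓ+1)) = (-1:ℚ)^(m+ℓ) := by
    rw [show m+1+(ℓ+1) = (m+ℓ)+2 by ring, pow_add]; norm_num
  have s4 : (-1:ℚ)^(m+(ℓ+1)) = -(-1:ℚ)^(m+ℓ) := by
    rw [show m+(ℓ+1) = (m+ℓ)+1 by ring, pow_add]; norm_num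
  rw [bb, bb, bb, bb, s1, s2, s3, s4]
  have a1 : ((m+2:ℕ):ℤ)+((ℓ+1:ℕ):ℤ)-1 = N+2 := by push_cast; omega
  have a2 : ((m+2:ℕ):ℤ)-((ℓ+1:ℕ):ℤ) = J+1 := by push_cast; omega
  have a3 : ((m+1:ℕ):ℤ)+(ℓ:ℤ)-1 = N := by push_cast; omega
  have a4 : ((m+1:ℕ):ℤ)-(ℓ:ℤ) = J+1 := by push_cast; omega
  have a5 : ((m+1:ℕ):ℤ)+((ℓ+1:ℕ):ℤ)-1 = N+1 := by push_cast; omega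
  have a6 : ((m+1:ℕ):ℤ)-((ℓ+1:ℕ):ℤ) = J := by push_cast; omega
  have a7 : ((m:ℕ):ℤ)+((ℓ+1:ℕ):ℤ)-1 = N := by push_cast; omega
  have a8 : ((m:ℕ):ℤ)-((ℓ+1:ℕ):ℤ) = J-1 := by push_cast; omega
  rw [a1, a2, a3, a4, a5, a6, a7, a8]
  linear_combination (-(-1:ℚ)^(m+ℓ)) * q1 + (-(-1:ℚ)^(m+ℓ)) * q2 + ((-1:ℚ)^(m+ℓ)) * q3

lemma key (m : ℕ) : ∀ k : ℕ,
    ∑ ℓ ∈ Finset.range (m + 1), Bmat m ℓ * Amat ℓ k = if m = k then 1 else 0 := by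
  induction m using Nat.twoStepInduction with
  | zero =>
    intro k
    rcases k with _ | k <;> simp [Bmat, Amat]
  | one =>
    intro k
    rw [Finset.sum_range_succ, Finset.sum_range_one]
    rcases k with _ | _ | k <;> norm_num [Amat, Bmat]
  | more m ih ih1 =>
    intro k
    rcases k with _ | k
    · -- k = 0
      rw [Finset.sum_range_succ']
      have hz : ∑ ℓ ∈ Finset.range (m+2), Bmat (m+2) (ℓ+1) * Amat (ℓ+1) 0 = 0 :=
        Finset.sum_eq_zero (fun ℓ _ => by rw [amat_k0 (ℓ+1) (by omega), mul_zero])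
      rw [hz, bmat_zero_right (m+2) (by omega), zero_mul, if_neg (by omega)]
      ring
    · -- k+1
      rw [Finset.sum_range_succ']
      have hsummand : ∀ ℓ : ℕ, Bmat (m+2) (ℓ+1) * Amat (ℓ+1) (k+1) =
          Bmat (m+1) ℓ * Amat ℓ k + 2*(Bmat (m+1) ℓ * Amat ℓ (k+1))
            + Bmat (m+1) ℓ * Amat ℓ (k+2)
            - 2*(Bmat (m+1) (ℓ+1) * Amat (ℓ+1) (k+1))
            - Bmat m (ℓ+1) * Amat (ℓ+1) (k+1) := by
        intro ℓ
        have hb : Bmat (m+2) (ℓ+1) = Bmat (m+1) ℓ - 2*Bmat (m+1) (ℓ+1) - Bmat m (ℓ+1) := by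
          rw [bmat_eq (m+2) (ℓ+1) (Or.inl (by omega)),
            bmat_eq (m+1) ℓ (Or.inl (by omega)),
            bmat_eq (m+1) (ℓ+1) (Or.inl (by omega)),
            bmat_eq m (ℓ+1) (Or.inr (by omega)), bb_rec]
        rw [hb, amat_rec ℓ k]
        ring
      rw [Finset.sum_congr rfl (fun ℓ _ => hsummand ℓ)]
      rw [Finset.sum_sub_distrib, Finset.sum_sub_distrib, Finset.sum_add_distrib,
        Finset.sum_add_distrib]
      have E2 : ∑ ℓ ∈ Finset.range (m+2), 2*(Bmat (m+1) ℓ * Amat ℓ (k+1)) =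
          2 * (if m+1 = k+1 then (1:ℚ) else 0) := by
        rw [← Finset.mul_sum, ih1 (k+1)]
      have E4 : ∑ ℓ ∈ Finset.range (m+2), 2*(Bmat (m+1) (ℓ+1) * Amat (ℓ+1) (k+1)) =
          2 * (if m+1 = k+1 then (1:ℚ) else 0) := by
        rw [← Finset.mul_sum]
        congr 1
        have := Finset.sum_range_succ' (fun ℓ => Bmat (m+1) ℓ * Amat ℓ (k+1)) (m+2)
        rw [Finset.sum_range_succ] at this
        have h0 : Bmat (m+1) 0 * Amat 0 (k+1) = 0 := by
          rw [bmat_zero_right (m+1) (by omega), zero_mul]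
        have htop : Bmat (m+1) (m+2) * Amat (m+2) (k+1) = 0 := by
          rw [bmat_gt (by omega), zero_mul]
        rw [h0, htop, add_zero, add_zero] at this
        rw [← this, ih1 (k+1)]
      have E5 : ∑ ℓ ∈ Finset.range (m+2), Bmat m (ℓ+1) * Amat (ℓ+1) (k+1) =
          (if m = k+1 then (1:ℚ) else 0) := by
        have := Finset.sum_range_succ' (fun ℓ => Bmat m ℓ * Amat ℓ (k+1)) (m+2)
        rw [Finset.sum_range_succ, Finset.sum_range_succ] at this
        have h0 : Bmat m 0 * Amat 0 (k+1) = 0 := by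
          rw [amat_zero, if_neg (by omega), mul_zero]
        have ht1 : Bmat m (m+1) * Amat (m+1) (k+1) = 0 := by
          rw [bmat_gt (by omega), zero_mul]
        have ht2 : Bmat m (m+2) * Amat (m+2) (k+1) = 0 := by
          rw [bmat_gt (by omega), zero_mul]
        rw [h0, ht1, ht2, add_zero, add_zero, add_zero] at this
        rw [← this, ih (k+1)]
      rw [ih1 k, E2, ih1 (k+2), E4, E5, bmat_zero_right (m+2) (by omega), zero_mul, add_zero]
      split_ifs <;> (try norm_num) <;> omega

/-- `B` is the inverse of the unitriangular matrix `A`: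
`Σ_{ℓ=0}^{m} B_{m,ℓ}·A_{ℓ,ℓ'} = δ_{m,ℓ'}`. -/
theorem stmt9 (m ℓ' : ℕ) :
    ∑ ℓ ∈ Finset.range (m + 1), Bmat m ℓ * Amat ℓ ℓ' = if m = ℓ' then 1 else 0 :=
  key m ℓ'
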